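/- A ring R is left noetherian if and only if every finitely injective left R-module is injective. -/

import Mathlib

open DirectSum

/-- A module `M` is finitely injective if every finite subset of `M` is contained in an
injective submodule of `M`. -/
def FinitelyInjective (R : Type*) [Ring R] (M : Type*) [AddCommGroup M] [Module R M] : Prop :=
  ∀ s : Finset M, ∃ N : Submodule R M, Module.Injective R N ∧ ∀ x ∈ s, x ∈ N

/-- An injective module `M` is `Σ`-injective if every direct sum of copies of `M`
is injective. -/
def SigmaInjective (R : Type u) [Ring R] (M : Type v) [AddCommGroup M] [Module R M] : Prop :=
  ∀ ι : Type v, Module.Injective R (⨁ _ : ι, M)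

/-- A module is a direct sum of injective modules if it is the internal direct sum of a
family of injective submodules. -/
def IsDirectSumOfInjectives (R : Type u) [Ring R] (M : Type v) [AddCommGroup M]
    [Module R M] : Prop :=
  ∃ (ι : Type v) (_ : DecidableEq ι) (p : ι → Submodule R M),
    (∀ i, Module.Injective R (p i)) ∧ DirectSum.IsInternal p

universe v

open CategoryTheory

lemma fwdAux (R : Type u) [Ring R] [IsNoetherianRing R]
    (M : Type u) [AddCommGroup M] [Module R M] (hM : FinitelyInjective R M) :
    Module.Injective R M := by
  classical
  apply Module.Baer.injective
  intro I g
  obtain ⟨S, rfl⟩ := IsNoetherian.noetherian I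
  have ht := hM ((Finset.attach S).image (fun (r : {x : R // x ∈ S}) =>
    g ⟨r.1, Submodule.subset_span r.2⟩))
  obtain ⟨N, hN, hsub⟩ := ht
  have key : ∀ (a : R) (h : a ∈ Submodule.span R (S : Set R)), g ⟨a, h⟩ ∈ N := by
    intro a ha
    induction ha using Submodule.span_induction with
    | mem x hx =>
        exact hsub _ (Finset.mem_image.mpr ⟨⟨x, hx⟩, Finset.mem_attach _ _, rfl⟩)
    | zero =>
        have : (⟨0, Submodule.zero_mem _⟩ : Submodule.span R (S : Set R)) = 0 := rfl
        rw [this, map_zero]; exact N.zero_mem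
    | add x y hx hy ihx ihy =>
        have : (⟨x + y, Submodule.add_mem _ hx hy⟩ : Submodule.span R (S : Set R))
            = ⟨x, hx⟩ + ⟨y, hy⟩ := rfl
        rw [this, map_add]
        exact N.add_mem ihx ihy
    | smul r x hx ihx =>
        have : (⟨r • x, Submodule.smul_mem _ r hx⟩ : Submodule.span R (S : Set R))
            = r • ⟨x, hx⟩ := rfl
        rw [this, map_smul]
        exact N.smul_mem _ ihx
  let g₀ := g.codRestrict N (fun x => key x.1 x.2)
  obtain ⟨h, hh⟩ := hN.out (Submodule.span R (S : Set R)).subtype Subtype.val_injective g₀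
  refine ⟨N.subtype ∘ₗ h, fun x hx => ?_⟩
  have := hh ⟨x, hx⟩
  simpa [g₀] using congrArg (N.subtype) this

lemma Module.Injective.of_equiv' {R : Type u} [Ring R] {M : Type v} {N : Type v}
    [AddCommGroup M] [Module R M] [AddCommGroup N] [Module R N] (e : M ≃ₗ[R] N)
    (h : Module.Injective R M) : Module.Injective R N where
  out X Y _ _ _ _ i hi f := by
    obtain ⟨g, hg⟩ := h.out i hi (e.symm.toLinearMap ∘ₗ f)
    exact ⟨e.toLinearMap ∘ₗ g, fun x => by simp [hg x]⟩

lemma Module.Injective.pi' {R : Type u} [Ring R] {ι : Type} (E : ι → Type v)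
    [∀ i, AddCommGroup (E i)] [∀ i, Module R (E i)] (h : ∀ i, Module.Injective R (E i)) :
    Module.Injective R (Π i, E i) where
  out X Y _ _ _ _ i hi f := by
    choose g hg using fun j => (h j).out i hi ((LinearMap.proj j) ∘ₗ f)
    exact ⟨LinearMap.pi g, fun x => funext fun j => hg j x⟩

lemma bwdAux (R : Type u) [Ring R]
    (H : ∀ (M : Type u) [AddCommGroup M] [Module R M],
      FinitelyInjective R M → Module.Injective R M) :
    IsNoetherianRing R := by
  classical
  rw [isNoetherianRing_iff, ← monotone_stabilizes_iff_noetherian]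
  by_contra hcon
  push_neg at hcon
  obtain ⟨c, hc⟩ := hcon
  -- injective modules containing R ⧸ c n
  set Eo : ℕ → ModuleCat.{u} R := fun n => Injective.under (ModuleCat.of R (R ⧸ c n)) with hEo
  set E : ℕ → Type u := fun n => (Eo n : Type u) with hE
  have hEinj : ∀ n, Module.Injective R (E n) := fun n =>
    Module.injective_module_of_injective_object R (E n)
      (inj := (inferInstance : Injective (Eo n)))
  set ι : ∀ n, (R ⧸ c n) →ₗ[R] E n := fun n => (Injective.ι (ModuleCat.of R (R ⧸ c n))).hom with hι
  have hιinj : ∀ n, Function.Injective (ι n) := fun n =>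
    (ModuleCat.mono_iff_injective (Injective.ι (ModuleCat.of R (R ⧸ c n)))).mp inferInstance
  set M : Type u := ⨁ n, E n with hM
  -- M is finitely injective
  have hFI : FinitelyInjective R M := by
    intro s
    set F : Finset ℕ := s.sup (fun x => DFinsupp.support x) with hF
    set Φ : (Π j : F, E j.1) →ₗ[R] M :=
      ∑ j : F, (DirectSum.lof R ℕ E j.1) ∘ₗ (LinearMap.proj j) with hΦ
    have comp : ∀ (v : Π j : F, E j.1) (m : ℕ),
        Φ v m = if hm : m ∈ F then v ⟨m, hm⟩ else 0 := by
      intro v m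
      have : Φ v m = ∑ j : F, (DFinsupp.single j.1 (v j) : M) m := by
        rw [hΦ]
        simp only [LinearMap.sum_apply, LinearMap.coe_comp, Function.comp_apply,
          LinearMap.proj_apply]
        rw [DFinsupp.finset_sum_apply]
        apply Finset.sum_congr rfl
        intro j _
        rw [DirectSum.lof_eq_of, DirectSum.of]
        rfl
      rw [this]
      by_cases hm : m ∈ F
      · rw [Finset.sum_eq_single_of_mem (⟨m, hm⟩ : F) (Finset.mem_univ _)]
        · rw [DFinsupp.single_eq_same, dif_pos hm]
        · intro j _ hj
          apply DFinsupp.single_eq_of_ne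
          exact fun h => hj (Subtype.ext h.symm)
      · simp only [dif_neg hm]
        apply Finset.sum_eq_zero
        intro j _
        apply DFinsupp.single_eq_of_ne
        exact fun h => hm (h ▸ j.2)
    have hΦinj : Function.Injective Φ := by
      rw [← LinearMap.ker_eq_bot, LinearMap.ker_eq_bot']
      intro v hv
      funext j
      have := comp v j.1
      rw [hv] at this
      simpa [j.2] using this.symm
    refine ⟨LinearMap.range Φ, ?_, ?_⟩
    · have : Module.Injective R (Π j : F, E j.1) :=
        Module.Injective.pi' _ (fun j => hEinj j.1)
      exact Module.Injective.of_equiv' (LinearEquiv.ofInjective Φ hΦinj) this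
    · intro x hx
      have hsupp : DFinsupp.support x ⊆ F := Finset.le_sup (f := fun x => DFinsupp.support x) hx
      refine ⟨fun j => x j.1, ?_⟩
      apply DFinsupp.ext
      intro m
      rw [comp]
      by_cases hm : m ∈ F
      · simp [hm]
      · simp only [dif_neg hm]
        by_contra hne
        exact hm (hsupp (DFinsupp.mem_support_iff.mpr (fun h => hne h.symm)))
  have hMinj : Module.Injective R M := H M hFI
  -- the union ideal
  set I : Ideal R := ⨆ n, c n with hI
  have hmemI : ∀ x : I, ∃ n, (x : R) ∈ c n := by
    rintro ⟨x, hx⟩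
    have hx' : x ∈ sSup (Set.range c) := hx
    obtain ⟨p, ⟨n, rfl⟩, hp⟩ := (Submodule.mem_sSup_of_directed (s := Set.range c)
      (Set.range_nonempty c) (directedOn_range.mpr c.monotone.directed_le)).mp hx'
    exact ⟨n, hp⟩
  -- componentwise map into the product
  set Fp : I →ₗ[R] Π n, E n :=
    LinearMap.pi (fun n => (ι n) ∘ₗ (c n).mkQ ∘ₗ I.subtype) with hFp
  have hFp0 : ∀ (x : I) (n : ℕ), (x : R) ∈ c n → Fp x n = 0 := by
    intro x n hxn
    simp only [hFp, LinearMap.pi_apply, LinearMap.coe_comp, Function.comp_apply,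
      Submodule.coe_subtype]
    rw [show (c n).mkQ x = 0 from (Submodule.Quotient.mk_eq_zero _).mpr hxn, map_zero]
  -- the linear map into the direct sum
  have hchoice : ∀ x : I, ∃ k, ∀ n, k ≤ n → Fp x n = 0 := by
    intro x
    obtain ⟨k, hk⟩ := hmemI x
    exact ⟨k, fun n hn => hFp0 x n (c.monotone hn hk)⟩
  choose k hk using hchoice
  set f : I → M := fun x => ∑ n ∈ Finset.range (k x), DirectSum.lof R ℕ E n (Fp x n) with hf
  have hfcomp : ∀ (x : I) (m : ℕ), f x m = Fp x m := by
    intro x m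
    rw [hf]
    rw [DFinsupp.finset_sum_apply]
    have : ∀ n ∈ Finset.range (k x), (DirectSum.lof R ℕ E n (Fp x n) : M) m
        = (DFinsupp.single n (Fp x n) : M) m := by
      intro n _
      rw [DirectSum.lof_eq_of, DirectSum.of]
      rfl
    rw [Finset.sum_congr rfl this]
    by_cases hm : m ∈ Finset.range (k x)
    · rw [Finset.sum_eq_single_of_mem m hm]
      · simp
      · intro n _ hn
        exact DFinsupp.single_eq_of_ne hn.symm
    · rw [Finset.sum_eq_zero, hk x m (by simpa using hm)]
      intro n hn
      exact DFinsupp.single_eq_of_ne (fun h => hm (h ▸ hn))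
  set fl : I →ₗ[R] M :=
    { toFun := f
      map_add' := by
        intro x y
        apply DFinsupp.ext
        intro m
        rw [DirectSum.add_apply, hfcomp, hfcomp, hfcomp, map_add]
        rfl
      map_smul' := by
        intro r x
        apply DFinsupp.ext
        intro m
        rw [DirectSum.smul_apply, hfcomp, hfcomp, map_smul]
        rfl } with hfl
  obtain ⟨g, hg⟩ := hMinj.out I.subtype Subtype.val_injective fl
  set e : M := g 1 with he
  set B : ℕ := (DFinsupp.support e).sup id + 1 with hB
  have heB : ∀ m, B ≤ m → e m = 0 := by
    intro m hm
    by_contra hne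
    have hms : m ∈ DFinsupp.support e := DFinsupp.mem_support_iff.mpr hne
    have h2 : m ≤ (DFinsupp.support e).sup id := Finset.le_sup (f := id) hms
    omega
  have hIle : ∀ m, B ≤ m → I ≤ c m := by
    intro m hm x hx
    have h1 : g x = x • e := by
      conv_lhs => rw [show x = x • (1 : R) by simp]
      rw [map_smul, he]
    have h2 : fl ⟨x, hx⟩ = g x := (hg ⟨x, hx⟩).symm
    have h3 : (fl ⟨x, hx⟩ : M) m = 0 := by
      rw [h2, h1, DFinsupp.smul_apply, heB m hm, smul_zero]
    have h4 : Fp ⟨x, hx⟩ m = 0 := by rw [← hfcomp]; exact h3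
    have h5 : (c m).mkQ x = 0 := by
      apply hιinj m
      rw [map_zero]
      simpa [hFp] using h4
    exact (Submodule.Quotient.mk_eq_zero _).mp h5
  obtain ⟨m, hm, hne⟩ := hc B
  apply hne
  have h1 : c B = I := le_antisymm (le_iSup c B) (hIle B le_rfl)
  have h2 : c m = I := le_antisymm (le_iSup c m) (hIle m hm)
  rw [h1, h2]

theorem isNoetherianRing_iff_finitelyInjective_imp_injective (R : Type u) [Ring R] :
    IsNoetherianRing R ↔
      ∀ (M : Type u) [AddCommGroup M] [Module R M],
        FinitelyInjective R M → Module.Injective R M := by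
  constructor
  · intro hnoeth M _ _ hM
    exact fwdAux R M hM
  · exact bwdAux R
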